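/- Let φ be the morphism φ(A) = A^p B, φ(B) = A^q B with p > q ≥ 1, and u_β its fixed point. Define w^(0) = B, w^(n) = B·φ(w^(n-1)), and w = lim w^(n). Define v = u_β. Suppose: (i) every prefix of v of length n is a factor of u_β minimizing the B-count among factors of length n, (ii) every prefix of w of length n is a factor of u_β maximizing the B-count among factors of length n. Then for all n ∈ ℕ, the Abelian complexity of u_β satisfies AC(n) = 1 + U_k − Σ_{j=1}^{k} (d_j + e_j) U_{j-1}, where k is any index with n ≤ |w^(k)|, (d_k,…,d_0) is the normal U-representation of n, and (e_k,…,e_0) is the normal U-representation of U_{k+1} − n, with U_m = |φ^m(A)|. -/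

import Mathlib

/-- Number of occurrences of the letter `A` (encoded as `false`). -/
def countA (w : List Bool) : ℕ := w.count false

/-- Number of occurrences of the letter `B` (encoded as `true`). -/
def countB (w : List Bool) : ℕ := w.count true

/-- Extension of a morphism (given on letters) to finite words. -/
def applyM (φ : Bool → List Bool) (w : List Bool) : List Bool := (w.map φ).flatten

/-- `w` is a factor of the infinite word `u`. -/
def IsFactor (u : ℕ → Bool) (w : List Bool) : Prop :=
  ∃ i, w = (List.range w.length).map (fun j => u (i + j))

/-- The prefix of length `n` of the infinite word `u`. -/
def prefWord (u : ℕ → Bool) (n : ℕ) : List Bool := (List.range n).map u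

/-- The finite word `w` is a prefix of the infinite word `u`. -/
def IsPrefixOf (w : List Bool) (u : ℕ → Bool) : Prop := w = prefWord u w.length

/-- Abelian complexity: number of Parikh vectors of factors of length `n`. -/
noncomputable def AC (u : ℕ → Bool) (n : ℕ) : ℕ :=
  Set.ncard {P : ℕ × ℕ | ∃ w, IsFactor u w ∧ w.length = n ∧ P = (countA w, countB w)}

/-- `n`-fold iterate of the morphism `φ` applied to the letter `a`. -/
def iterW (φ : Bool → List Bool) (n : ℕ) (a : Bool) : List Bool := (applyM φ)^[n] [a]

/-- The morphism `A ↦ AᵖB, B ↦ A^q` (simple Parry case). -/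
def simpleM (p q : ℕ) : Bool → List Bool
  | false => List.replicate p false ++ [true]
  | true  => List.replicate q false

/-- The morphism `A ↦ AᵖB, B ↦ A^qB` (non-simple Parry case). -/
def nonsimpleM (p q : ℕ) : Bool → List Bool
  | false => List.replicate p false ++ [true]
  | true  => List.replicate q false ++ [true]

/-- Greedy digits `(d_N, …, d_0)` of `x` in the base given by `U`
    (assuming `U 0 = 1`): `d_j = ⌊x_j / U_j⌋`, `x_{j-1} = x_j mod U_j`. -/
def gdigits (U : ℕ → ℕ) : ℕ → ℕ → List ℕ
  | 0, x => [x]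
  | j+1, x => x / U (j+1) :: gdigits U j (x % U (j+1))

/-- The digit `d_j` of the normal `U`-representation `(d_N, …, d_0)` of `n`. -/
def dig (U : ℕ → ℕ) (N n j : ℕ) : ℕ := (gdigits U N n).getD (N - j) 0

/-- The words `w⁽ⁿ⁾` of the non-simple Parry case: `w⁽⁰⁾ = B`, `w⁽ⁿ⁾ = B·φ(w⁽ⁿ⁻¹⁾)`. -/
def wNon (φ : Bool → List Bool) : ℕ → List Bool
  | 0 => [true]
  | n+1 => true :: applyM φ (wNon φ n)

/-- The words `w⁽ᴺ⁾ = B·φ(A^{q-1})·φ³(A^{q-1})⋯φ^{2N-1}(A^{q-1})` of the simple Parry case. -/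
def wSim (φ : Bool → List Bool) (q : ℕ) (N : ℕ) : List Bool :=
  true :: ((List.range N).map
    (fun k => (applyM φ)^[2*k+1] (List.replicate (q-1) false))).flatten

section Aux

lemma countAB (l : List Bool) : countA l + countB l = l.length := by
  induction l with
  | nil => simp [countA, countB]
  | cons a t ih =>
      simp only [countA, countB, List.count_cons, List.length_cons] at *
      cases a <;> simp <;> omega

lemma applyM_append (φ : Bool → List Bool) (x y : List Bool) :
    applyM φ (x ++ y) = applyM φ x ++ applyM φ y := by simp [applyM]

lemma iterM_append (φ : Bool → List Bool) (m : ℕ) (x y : List Bool) :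
    (applyM φ)^[m] (x ++ y) = (applyM φ)^[m] x ++ (applyM φ)^[m] y := by
  induction m generalizing x y with
  | zero => simp
  | succ m ih => simp [Function.iterate_succ_apply, applyM_append, ih]

lemma iter_replicate (φ : Bool → List Bool) (m : ℕ) (a : Bool) (c : ℕ) (s : List Bool) :
    (applyM φ)^[m] (List.replicate c a ++ s)
      = (List.replicate c (iterW φ m a)).flatten ++ (applyM φ)^[m] s := by
  induction c with
  | zero => simp
  | succ c ih =>
      rw [List.replicate_succ, List.cons_append,
        show (a :: (List.replicate c a ++ s)) = [a] ++ (List.replicate c a ++ s) from rfl,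
        iterM_append, ih, List.replicate_succ]
      simp [iterW]

lemma structA (p q : ℕ) (φ : Bool → List Bool) (hφ : φ = nonsimpleM p q) (m : ℕ) :
    iterW φ (m+1) false = (List.replicate p (iterW φ m false)).flatten ++ iterW φ m true := by
  have h : iterW φ (m+1) false = (applyM φ)^[m] (applyM φ [false]) := by
    simp [iterW, Function.iterate_succ_apply]
  rw [h]
  have h1 : applyM φ [false] = List.replicate p false ++ [true] := by simp [applyM, hφ, nonsimpleM]
  rw [h1, iter_replicate]; rfl

lemma structB (p q : ℕ) (φ : Bool → List Bool) (hφ : φ = nonsimpleM p q) (m : ℕ) :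
    iterW φ (m+1) true = (List.replicate q (iterW φ m false)).flatten ++ iterW φ m true := by
  have h : iterW φ (m+1) true = (applyM φ)^[m] (applyM φ [true]) := by
    simp [iterW, Function.iterate_succ_apply]
  rw [h]
  have h1 : applyM φ [true] = List.replicate q false ++ [true] := by simp [applyM, hφ, nonsimpleM]
  rw [h1, iter_replicate]; rfl

lemma countB_applyM (p q : ℕ) (φ : Bool → List Bool) (hφ : φ = nonsimpleM p q) (u : List Bool) :
    countB (applyM φ u) = u.length := by
  induction u with
  | nil => simp [applyM, countB]
  | cons a t ih =>
      have h : applyM φ (a :: t) = φ a ++ applyM φ t := by simp [applyM]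
      rw [h]
      have ha : countB (φ a) = 1 := by
        cases a <;> simp [hφ, nonsimpleM, countB, List.count_append, List.count_replicate]
      simp only [countB] at *
      rw [List.count_append, ha, ih, List.length_cons]; omega

lemma countB_join_replicate (c : ℕ) (x : List Bool) :
    countB (List.replicate c x).flatten = c * countB x := by
  induction c with
  | zero => simp [countB]
  | succ c ih =>
      simp only [List.replicate_succ, List.flatten_cons, countB, List.count_append] at *
      rw [ih]; ring

def dsum (U : ℕ → ℕ) (k n : ℕ) : ℕ := ∑ j ∈ Finset.Icc 1 k, dig U k n j * U (j-1)

lemma dsum_zero (U : ℕ → ℕ) (n : ℕ) : dsum U 0 n = 0 := by simp [dsum]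

lemma dsum_succ (U : ℕ → ℕ) (k n : ℕ) :
    dsum U (k+1) n = (n / U (k+1)) * U k + dsum U k (n % U (k+1)) := by
  unfold dsum
  rw [← Finset.Ico_add_one_right_eq_Icc, Finset.sum_Ico_succ_top (by omega : 1 ≤ k + 1),
    Finset.Ico_add_one_right_eq_Icc]
  have h1 : dig U (k+1) n (k+1) = n / U (k+1) := by
    simp [dig, gdigits]
  have h2 : ∀ j ∈ Finset.Icc 1 k, dig U (k+1) n j * U (j-1)
      = dig U k (n % U (k+1)) j * U (j-1) := by
    intro j hj
    simp only [Finset.mem_Icc] at hj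
    have hkj : k + 1 - j = (k - j) + 1 := by omega
    simp [dig, gdigits, hkj]
  rw [Finset.sum_congr rfl h2, h1, Nat.add_sub_cancel]
  ring

lemma blk (c : ℕ) (x y : List Bool) (d : ℕ) (r : ℕ) (h : d ≤ c) :
    countB (((List.replicate c x).flatten ++ y).take (d * x.length + r))
      = d * countB x + countB (((List.replicate (c - d) x).flatten ++ y).take r) := by
  induction d generalizing c with
  | zero => simp
  | succ d ih =>
      obtain ⟨c', rfl⟩ : ∃ c', c = c' + 1 := ⟨c - 1, by omega⟩
      rw [List.replicate_succ, List.flatten_cons, List.append_assoc,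
        show (d+1) * x.length + r = x.length + (d * x.length + r) by ring,
        List.take_length_add_append, show c' + 1 - (d+1) = c' - d by omega]
      simp only [countB, List.count_append] at *
      rw [ih c' (by omega)]
      ring

lemma take_first_block (c : ℕ) (x y : List Bool) (r : ℕ) (hc : 1 ≤ c) (hr : r ≤ x.length) :
    ((List.replicate c x).flatten ++ y).take r = x.take r := by
  obtain ⟨c', rfl⟩ : ∃ c', c = c' + 1 := ⟨c - 1, by omega⟩
  rw [List.replicate_succ, List.flatten_cons, List.append_assoc,
    List.take_append_of_le_length hr]

lemma helper (U : ℕ → ℕ) (k c : ℕ) (A y : List Bool) (hA : A.length = U (k+1))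
    (hcb : countB A = U k) (hy : y.length ≤ U (k+1))
    (IH1 : ∀ n < U (k+1), countB (A.take n) = dsum U k n)
    (IH2 : ∀ r < y.length, countB (y.take r) = dsum U k r) :
    ∀ r < c * U (k+1) + y.length,
      countB (((List.replicate c A).flatten ++ y).take r) = dsum U (k+1) r := by
  intro r hr
  rcases Nat.eq_zero_or_pos (U (k+1)) with hL | hL
  · rw [hL] at hy; rw [hL] at hr; omega
  set L := U (k+1) with hLdef
  have hd : r / L ≤ c := by
    have hlt : r < (c+1) * L := by nlinarith [hy, hr]
    exact Nat.lt_succ_iff.mp (Nat.div_lt_iff_lt_mul hL |>.mpr hlt)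
  rcases lt_or_eq_of_le hd with hdlt | hdeq
  · -- d < c : remainder lands in a copy of A
    have hmod : r % L < L := Nat.mod_lt _ hL
    have LHS : countB (((List.replicate c A).flatten ++ y).take r)
        = (r / L) * countB A + countB (A.take (r % L)) := by
      conv_lhs => rw [show r = r / L * A.length + r % L by
        rw [hA]; have h := Nat.mod_add_div' r L; omega]
      rw [blk c A y (r / L) (r % L) hd,
        take_first_block (c - r / L) A y (r % L) (by omega) (by rw [hA]; omega)]
    rw [LHS, IH1 _ hmod, hcb, dsum_succ]
  · -- d = c : remainder lands in y
    have hge : c * L ≤ r := by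
      have h := Nat.mod_add_div' r L
      rw [hdeq] at h; omega
    have hr' : r - c * L < y.length := by omega
    have LHS : countB (((List.replicate c A).flatten ++ y).take r)
        = c * countB A + countB (y.take (r - c * L)) := by
      conv_lhs => rw [show r = c * A.length + (r - c * L) by rw [hA]; omega]
      rw [blk c A y c _ le_rfl]
      simp
    have hmod : r % L = r - c * L := by
      have h := Nat.mod_add_div' r L
      rw [hdeq] at h; omega
    rw [LHS, IH2 _ hr', hcb, dsum_succ, hmod, hdeq]

variable {p q : ℕ} {φ : Bool → List Bool}

lemma lenA_succ (hφ : φ = nonsimpleM p q) (m : ℕ) :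
    (iterW φ (m+1) false).length
      = p * (iterW φ m false).length + (iterW φ m true).length := by
  rw [structA p q φ hφ m]; simp

lemma lenB_succ (hφ : φ = nonsimpleM p q) (m : ℕ) :
    (iterW φ (m+1) true).length
      = q * (iterW φ m false).length + (iterW φ m true).length := by
  rw [structB p q φ hφ m]; simp

lemma lenV_le (hφ : φ = nonsimpleM p q) (hpq : q ≤ p) (m : ℕ) :
    (iterW φ m true).length ≤ (iterW φ m false).length := by
  induction m with
  | zero => simp [iterW]
  | succ m ih =>
      rw [lenA_succ hφ, lenB_succ hφ]
      have := Nat.mul_le_mul_right (iterW φ m false).length hpq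
      omega

lemma countB_iterA (hφ : φ = nonsimpleM p q) (m : ℕ) :
    countB (iterW φ (m+1) false) = (iterW φ m false).length := by
  rw [iterW, Function.iterate_succ_apply']
  exact countB_applyM p q φ hφ _

lemma countMain (hq : 1 ≤ q) (hpq : q < p) (hφ : φ = nonsimpleM p q)
    (U : ℕ → ℕ) (hU : ∀ m, U m = (iterW φ m false).length) : ∀ k,
    (∀ n < U (k+1), countB ((iterW φ (k+1) false).take n) = dsum U k n)
    ∧ (∀ r < (iterW φ (k+1) true).length,
        countB ((iterW φ (k+1) true).take r) = dsum U k r) := by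
  intro k
  induction k with
  | zero =>
      have hA1 : iterW φ 1 false = List.replicate p false ++ [true] := by
        simp [iterW, applyM, hφ, nonsimpleM]
      have hB1 : iterW φ 1 true = List.replicate q false ++ [true] := by
        simp [iterW, applyM, hφ, nonsimpleM]
      have hU1 : U 1 = p + 1 := by rw [hU 1, hA1]; simp
      constructor
      · intro n hn
        rw [hU1] at hn
        rw [hA1, List.take_append_of_le_length (by simp; omega), dsum_zero]
        simp [countB, List.take_replicate, List.count_replicate]
      · intro r hr
        rw [hB1] at hr
        simp at hr
        rw [hB1, List.take_append_of_le_length (by simp; omega), dsum_zero]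
        simp [countB, List.take_replicate, List.count_replicate]
  | succ k ih =>
      have hA : (iterW φ (k+1) false).length = U (k+1) := (hU (k+1)).symm
      have hcb : countB (iterW φ (k+1) false) = U k := by
        rw [countB_iterA hφ, hU]
      have hy : (iterW φ (k+1) true).length ≤ U (k+1) := by
        rw [hU]; exact lenV_le hφ (le_of_lt hpq) (k+1)
      constructor
      · intro n hn
        rw [structA p q φ hφ (k+1)]
        apply helper U k p _ _ hA hcb hy ih.1 ih.2
        rw [hU (k+2), lenA_succ hφ (k+1), ← hU (k+1)] at hn
        omega
      · intro r hr
        rw [structB p q φ hφ (k+1)]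
        apply helper U k q _ _ hA hcb hy ih.1 ih.2
        rw [lenB_succ hφ (k+1), hA] at hr
        exact hr

lemma phi_rev (hφ : φ = nonsimpleM p q) (a : Bool) :
    (φ a).reverse ++ [true] = true :: φ a := by
  cases a <;> simp [hφ, nonsimpleM]

lemma keyrev (hφ : φ = nonsimpleM p q) :
    ∀ u : List Bool, (applyM φ u).reverse ++ [true] = true :: applyM φ u.reverse := by
  intro u
  induction u with
  | nil => simp [applyM]
  | cons a t ih =>
      have h1 : applyM φ (a :: t) = φ a ++ applyM φ t := by simp [applyM]
      have h2 : applyM φ ((a :: t).reverse) = applyM φ t.reverse ++ applyM φ [a] := by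
        rw [List.reverse_cons, applyM_append]
      have h3 : applyM φ [a] = φ a := by simp [applyM]
      rw [h1, h2, h3, List.reverse_append, List.append_assoc, phi_rev hφ a,
        show ((applyM φ t).reverse ++ true :: φ a : List Bool)
            = ((applyM φ t).reverse ++ [true]) ++ φ a by simp, ih]
      simp

lemma wSuffix (hq : 1 ≤ q) (hpq : q < p) (hφ : φ = nonsimpleM p q) :
    ∀ k, (wNon φ k).reverse.IsSuffix (iterW φ (k+1) false)
      ∧ (wNon φ k).length < (iterW φ (k+1) false).length := by
  intro k
  induction k with
  | zero =>
      have hA1 : iterW φ 1 false = List.replicate p false ++ [true] := by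
        simp [iterW, applyM, hφ, nonsimpleM]
      constructor
      · exact ⟨List.replicate p false, by rw [hA1]; rfl⟩
      · rw [hA1]; simp [wNon]; omega
  | succ k ih =>
      obtain ⟨⟨t, ht⟩, hlen⟩ := ih
      have htlen : 1 ≤ t.length := by
        have := congrArg List.length ht
        simp at this
        omega
      obtain ⟨t', a, rfl⟩ : ∃ t' a, t = t' ++ [a] := by
        rcases List.eq_nil_or_concat t with h | ⟨t', a, h⟩
        · simp [h] at htlen
        · exact ⟨t', a, by simpa using h⟩
      -- φ a = replicate c false ++ [true]
      obtain ⟨c, hc, hca⟩ : ∃ c, q ≤ c ∧ φ a = List.replicate c false ++ [true] := by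
        cases a
        · exact ⟨p, le_of_lt hpq, by simp [hφ, nonsimpleM]⟩
        · exact ⟨q, le_rfl, by simp [hφ, nonsimpleM]⟩
      have hstep : iterW φ (k+2) false = applyM φ (t' ++ [a]) ++ applyM φ (wNon φ k).reverse := by
        rw [iterW, Function.iterate_succ_apply', ← iterW, ← ht, applyM_append]
      have hrev : (wNon φ (k+1)).reverse = true :: applyM φ (wNon φ k).reverse := by
        show (wNon φ (k+1)).reverse = true :: applyM φ (wNon φ k).reverse
        rw [show wNon φ (k+1) = true :: applyM φ (wNon φ k) from rfl,
          List.reverse_cons, keyrev hφ]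
      have hsplit : applyM φ (t' ++ [a])
          = (applyM φ t' ++ List.replicate c false) ++ [true] := by
        rw [applyM_append, show applyM φ [a] = φ a by simp [applyM], hca]
        simp
      refine ⟨⟨applyM φ t' ++ List.replicate c false, ?_⟩, ?_⟩
      · rw [hstep, hsplit, hrev]
        simp
      · show (wNon φ (k+1)).length < (iterW φ (k+2) false).length
        have h1 := congrArg List.length hstep
        have h2 := congrArg List.length hrev
        have h3 := congrArg List.length hsplit
        simp only [List.length_append, List.length_cons, List.length_reverse,
          List.length_replicate] at h1 h2 h3
        omega

lemma ivt (f : ℕ → ℕ) (hf : ∀ i, f i ≤ f (i+1) + 1 ∧ f (i+1) ≤ f i + 1) :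
    ∀ m c, f 0 ≤ c → c ≤ f m → ∃ i, f i = c := by
  intro m
  induction m with
  | zero => intro c h0 hm; exact ⟨0, by omega⟩
  | succ m ih =>
      intro c h0 hm
      by_cases hc : c ≤ f m
      · exact ih c h0 hc
      · exact ⟨m+1, by have := (hf m).2; omega⟩

lemma window_cons (u : ℕ → Bool) (i n : ℕ) :
    (List.range (n+1)).map (fun j => u (i + j))
      = u i :: (List.range n).map (fun j => u (i + 1 + j)) := by
  rw [List.range_succ_eq_map, List.map_cons, List.map_map]
  refine congrArg₂ _ (by simp) ?_
  refine List.map_congr_left fun j _ => ?_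
  simp [Function.comp]
  congr 1
  omega

lemma window_snoc (u : ℕ → Bool) (i n : ℕ) :
    (List.range (n+1)).map (fun j => u (i + j))
      = (List.range n).map (fun j => u (i + j)) ++ [u (i + n)] := by
  rw [List.range_succ]; simp

lemma parikh_card (n b W : ℕ) (hbW : b ≤ W) :
    ((fun c => ((n - c, c) : ℕ × ℕ)) '' Set.Icc b W).ncard = W + 1 - b := by
  rw [Set.ncard_image_of_injective _ (fun a b h => congrArg Prod.snd h),
    ← Finset.coe_Icc, Set.ncard_coe_finset, Nat.card_Icc]

lemma pref_take (u : ℕ → Bool) (M n : ℕ) (h : n ≤ M) :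
    (prefWord u M).take n = prefWord u n := by
  simp [prefWord, ← List.map_take, List.take_range, Nat.min_eq_left h]


end Aux

/-- formula for the Abelian complexity in the non-simple Parry case,
assuming the extremal properties of `v = u_β` and `w = lim w⁽ⁿ⁾`. -/
theorem stmt16 (p q : ℕ) (hq : 1 ≤ q) (hpq : q < p)
    (φ : Bool → List Bool) (hφ : φ = nonsimpleM p q)
    (ub : ℕ → Bool) (hub : ∀ m, IsPrefixOf (iterW φ m false) ub)
    (U : ℕ → ℕ) (hU : ∀ m, U m = (iterW φ m false).length)
    (winf : ℕ → Bool) (hwinf : ∀ m, IsPrefixOf (wNon φ m) winf)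
    (hvfac : ∀ n : ℕ, IsFactor ub (prefWord ub n))
    (hvmin : ∀ (n : ℕ) (x : List Bool), IsFactor ub x → x.length = n →
      countB (prefWord ub n) ≤ countB x)
    (hwfac : ∀ n : ℕ, IsFactor ub (prefWord winf n))
    (hwmax : ∀ (n : ℕ) (x : List Bool), IsFactor ub x → x.length = n →
      countB x ≤ countB (prefWord winf n))
    (n k : ℕ) (hn : 0 < n) (hk : n ≤ (wNon φ k).length) :
    AC ub n = 1 + U k - ∑ j ∈ Finset.Icc 1 k,
      (dig U k n j + dig U k (U (k+1) - n) j) * U (j-1) := by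
  set A := iterW φ (k+1) false with hAdef
  set wk := wNon φ k with hwkdef
  set L := wk.length with hLdef
  obtain ⟨hsuf, hLlt⟩ := wSuffix hq hpq hφ k
  rw [← hwkdef, ← hAdef] at hLlt hsuf
  have hUk1 : U (k+1) = A.length := hU (k+1)
  have hnU : n < U (k+1) := by rw [hUk1]; omega
  have hUpos : 1 ≤ U (k+1) := by omega
  set N := U (k+1) - n with hNdef
  have hNU : N < U (k+1) := by omega
  have hcbA : countB A = U k := by
    rw [hAdef, countB_iterA hφ, hU]
  -- prefix of ub
  have hprefA : prefWord ub n = A.take n := by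
    have h1 := hub (k+1)
    rw [IsPrefixOf] at h1
    rw [← hAdef] at h1
    conv_rhs => rw [h1]
    rw [pref_take _ _ _ (by omega)]
  have hb : countB (prefWord ub n) = dsum U k n := by
    rw [hprefA]
    exact (countMain hq hpq hφ U hU k).1 n hnU
  -- prefix of winf
  have hprefW : prefWord winf n = wk.take n := by
    have h1 := hwinf k
    rw [IsPrefixOf] at h1
    rw [← hwkdef, ← hLdef] at h1
    conv_rhs => rw [h1]
    rw [pref_take _ _ _ hk]
  obtain ⟨t, ht⟩ := hsuf
  have htlen : t.length = A.length - L := by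
    have h := congrArg List.length ht
    simp only [List.length_append, List.length_reverse] at h
    omega
  have hrevdrop : wk.reverse = A.drop (A.length - L) := by
    rw [← htlen, ← ht, List.drop_left]
  have hW : countB (prefWord winf n) = U k - dsum U k N ∧ dsum U k N ≤ U k := by
    have e1 : countB (prefWord winf n) = countB (A.drop (A.length - n)) := by
      rw [hprefW, countB, ← List.count_reverse, List.reverse_take, ← hLdef,
        hrevdrop, List.drop_drop, show A.length - L + (L - n) = A.length - n by omega]
      rfl
    have e2 : countB (A.take (A.length - n)) + countB (A.drop (A.length - n))
        = countB A := by
      rw [countB, countB, countB, ← List.count_append, List.take_append_drop]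
    have e3 : countB (A.take (A.length - n)) = dsum U k N := by
      have : A.length - n = N := by omega
      rw [this]
      exact (countMain hq hpq hφ U hU k).1 N hNU
    constructor
    · rw [e1]; omega
    · omega
  have hbW : countB (prefWord ub n) ≤ countB (prefWord winf n) :=
    hvmin n (prefWord winf n) (hwfac n) (by simp [prefWord])
  -- the Parikh set
  set b := countB (prefWord ub n) with hbdef
  set W := countB (prefWord winf n) with hWdef
  have hset : {P : ℕ × ℕ | ∃ x, IsFactor ub x ∧ x.length = n ∧ P = (countA x, countB x)}
      = (fun c => ((n - c, c) : ℕ × ℕ)) '' Set.Icc b W := by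
    ext P
    constructor
    · rintro ⟨x, hxf, hxl, rfl⟩
      refine ⟨countB x, ⟨hvmin n x hxf hxl, hwmax n x hxf hxl⟩, ?_⟩
      have hab := countAB x
      have hca : countA x = n - countB x := by omega
      rw [hca]
    · rintro ⟨c, ⟨hc1, hc2⟩, rfl⟩
      obtain ⟨m, rfl⟩ : ∃ m, n = m + 1 := ⟨n - 1, by omega⟩
      set f : ℕ → ℕ := fun i => countB ((List.range (m+1)).map (fun j => ub (i + j)))
        with hfdef
      set g : ℕ → ℕ := fun i => countB ((List.range m).map (fun j => ub (i + 1 + j)))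
        with hgdef
      have e1 : ∀ i, f i = (if ub i = true then 1 else 0) + g i := by
        intro i
        rw [hfdef]
        simp only
        rw [window_cons ub i m, countB, List.count_cons]
        cases h : ub i <;> simp [hgdef, countB] <;> omega
      have e2 : ∀ i, f (i+1) = g i + (if ub (i+1+m) = true then 1 else 0) := by
        intro i
        rw [hfdef]
        simp only
        rw [window_snoc ub (i+1) m, countB, List.count_append]
        cases h : ub (i+1+m) <;> simp [hgdef, countB, h]
      have hlip : ∀ i, f i ≤ f (i+1) + 1 ∧ f (i+1) ≤ f i + 1 := by
        intro i
        rw [e1 i, e2 i]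
        cases h1 : ub i <;> cases h2 : ub (i+1+m) <;> simp [h1, h2] <;> omega
      have hf0 : f 0 = b := by
        rw [hfdef, hbdef]
        simp [prefWord, countB]
      obtain ⟨i1, hi1⟩ : ∃ i1, f i1 = W := by
        obtain ⟨i1, heq⟩ := hwfac (m+1)
        refine ⟨i1, ?_⟩
        rw [hfdef, hWdef]
        simp only
        have hl : (prefWord winf (m+1)).length = m + 1 := by simp [prefWord]
        rw [hl] at heq
        rw [← heq]
      obtain ⟨i, hi⟩ := ivt f hlip i1 c (by omega) (by omega)
      refine ⟨(List.range (m+1)).map (fun j => ub (i + j)), ⟨i, by simp⟩, by simp, ?_⟩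
      have hlen : ((List.range (m+1)).map (fun j => ub (i + j))).length = m + 1 := by simp
      have := countAB ((List.range (m+1)).map (fun j => ub (i + j)))
      rw [hlen] at this
      have hcount : countB ((List.range (m+1)).map (fun j => ub (i + j))) = c := hi
      simp only [Prod.mk.injEq]
      constructor
      · omega
      · exact hcount.symm
  have hAC : AC ub n = W + 1 - b := by
    rw [AC, hset, parikh_card (n) b W hbW]
  -- final arithmetic
  have hsum : ∑ j ∈ Finset.Icc 1 k, (dig U k n j + dig U k N j) * U (j-1)
      = dsum U k n + dsum U k N := by
    rw [dsum, dsum, ← Finset.sum_add_distrib]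
    exact Finset.sum_congr rfl fun j _ => by ring
  obtain ⟨hW1, hW2⟩ := hW
  rw [hAC, hsum]
  omega
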